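/- Let u = (σ_x − σ_z)/√2 and define D_n by D_0 = [0], D_{n+1} = (1/2)·[[D_n, I],[I, D_n]]. Then for every n ≥ 1, the matrix u^{⊗n} (n-fold Kronecker power of u) diagonalizes D_n: u^{⊗n} D_n u^{⊗n} is a diagonal matrix. -/

import Mathlib

open Matrix

noncomputable def Dmat : (n : ℕ) → Matrix (Fin (2 ^ n)) (Fin (2 ^ n)) ℝ
  | 0 => 0
  | n + 1 =>
      Matrix.reindex (finSumFinEquiv.trans (finCongr (by ring : 2 ^ n + 2 ^ n = 2 ^ (n + 1))))
        (finSumFinEquiv.trans (finCongr (by ring)))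
        ((1 / 2 : ℝ) • Matrix.fromBlocks (Dmat n) 1 1 (Dmat n))

/-- `μ` is an eigenvalue of the square matrix `A`. -/
def HasEig {m : ℕ} (A : Matrix (Fin m) (Fin m) ℝ) (μ : ℝ) : Prop :=
  ∃ v : Fin m → ℝ, v ≠ 0 ∧ A.mulVec v = μ • v

open Kronecker

noncomputable def uMat : Matrix (Fin 2) (Fin 2) ℝ :=
  (Real.sqrt 2)⁻¹ • (!![0, 1; 1, 0] - !![1, 0; 0, -1])

/-- The `n`-fold Kronecker power of `uMat`. -/
noncomputable def uKron : (n : ℕ) → Matrix (Fin (2 ^ n)) (Fin (2 ^ n)) ℝ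
  | 0 => 1
  | n + 1 =>
      Matrix.reindex (finProdFinEquiv.trans (finCongr (by ring : 2 * 2 ^ n = 2 ^ (n + 1))))
        (finProdFinEquiv.trans (finCongr (by ring)))
        (uMat ⊗ₖ uKron n)

lemma uMat_mul_uMat : uMat * uMat = 1 := by
  have h : (!![0, 1; 1, 0] - !![(1:ℝ), 0; 0, -1]) * (!![0, 1; 1, 0] - !![1, 0; 0, -1])
      = (2:ℝ) • 1 := by
    norm_num [Matrix.sub_mul, Matrix.mul_sub, Matrix.mul_fin_two]
    ext i j; fin_cases i <;> fin_cases j <;> simp [Matrix.one_apply] <;> norm_num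
  rw [uMat, Matrix.smul_mul, Matrix.mul_smul, h, smul_smul, smul_smul]
  rw [show ((Real.sqrt 2)⁻¹ * (Real.sqrt 2)⁻¹ * 2) =
    ((Real.sqrt 2 * Real.sqrt 2)⁻¹ * 2) by ring]
  rw [Real.mul_self_sqrt (by norm_num)]
  norm_num

lemma uXu : uMat * !![0, 1; 1, 0] * uMat = !![(-1:ℝ), 0; 0, 1] := by
  have h : (!![0, 1; 1, 0] - !![(1:ℝ), 0; 0, -1]) * !![0, 1; 1, 0] *
      (!![0, 1; 1, 0] - !![1, 0; 0, -1]) = (2:ℝ) • !![(-1:ℝ), 0; 0, 1] := by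
    norm_num [Matrix.sub_mul, Matrix.mul_sub, Matrix.mul_fin_two]
    refine ⟨?_, ?_, ?_⟩ <;> ext i <;> fin_cases i <;> simp
  rw [uMat, Matrix.smul_mul, Matrix.mul_smul, Matrix.smul_mul, h, smul_smul, smul_smul]
  rw [show ((Real.sqrt 2)⁻¹ * (Real.sqrt 2)⁻¹ * 2) =
    ((Real.sqrt 2 * Real.sqrt 2)⁻¹ * 2) by ring]
  rw [Real.mul_self_sqrt (by norm_num)]
  norm_num

lemma uKron_mul_self : ∀ n, uKron n * uKron n = 1
  | 0 => by simp [uKron]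
  | n + 1 => by
      rw [uKron, Matrix.reindex_apply, Matrix.submatrix_mul_equiv,
        ← Matrix.mul_kronecker_mul, uMat_mul_uMat, uKron_mul_self n,
        Matrix.one_kronecker_one, Matrix.submatrix_one_equiv]

/-- The equivalence `Fin 2 × Fin N ≃ Fin N ⊕ Fin N`. -/
def gEquiv (N : ℕ) : Fin 2 × Fin N ≃ Fin N ⊕ Fin N :=
  (finTwoEquiv.prodCongr (Equiv.refl (Fin N))).trans (Equiv.boolProdEquivSum (Fin N))

lemma equiv_eq (n : ℕ) :
    (finProdFinEquiv.trans (finCongr (by ring : 2 * 2 ^ n = 2 ^ (n + 1)))) =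
      (gEquiv (2 ^ n)).trans
        (finSumFinEquiv.trans (finCongr (by ring : 2 ^ n + 2 ^ n = 2 ^ (n + 1)))) := by
  ext ⟨i, j⟩
  fin_cases i <;>
    simp [gEquiv, finTwoEquiv, finProdFinEquiv, finSumFinEquiv, Fin.ext_iff] <;> omega

lemma Dmat_succ_kron (n : ℕ) :
    Dmat (n + 1) =
      Matrix.reindex (finProdFinEquiv.trans (finCongr (by ring : 2 * 2 ^ n = 2 ^ (n + 1))))
        (finProdFinEquiv.trans (finCongr (by ring)))
        ((1 / 2 : ℝ) • ((1 : Matrix (Fin 2) (Fin 2) ℝ) ⊗ₖ Dmat n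
          + !![(0:ℝ), 1; 1, 0] ⊗ₖ (1 : Matrix (Fin (2^n)) (Fin (2^n)) ℝ))) := by
  rw [Dmat, equiv_eq]
  conv_rhs => rw [← Matrix.reindex_trans, Equiv.trans_apply]
  refine congrArg _ ?_
  ext i j
  rcases i with i | i <;> rcases j with j | j <;>
    simp [gEquiv, finTwoEquiv, Matrix.reindex_apply, Matrix.submatrix_apply, Matrix.one_apply,
      Matrix.kroneckerMap_apply, Matrix.fromBlocks]

lemma isDiag_aux : ∀ n, (uKron n * Dmat n * uKron n).IsDiag := by
  intro n
  induction n with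
  | zero => rw [Dmat]; simp
  | succ n ih =>
      rw [Dmat_succ_kron, uKron, Matrix.reindex_apply, Matrix.reindex_apply,
        Matrix.submatrix_mul_equiv, Matrix.submatrix_mul_equiv]
      intro i j hij
      simp only [Matrix.submatrix_apply]
      have key : ((uMat ⊗ₖ uKron n) * ((1 / 2 : ℝ) • ((1 : Matrix (Fin 2) (Fin 2) ℝ) ⊗ₖ Dmat n
          + !![(0:ℝ), 1; 1, 0] ⊗ₖ 1)) * (uMat ⊗ₖ uKron n)).IsDiag := by
        rw [Matrix.mul_smul, Matrix.smul_mul]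
        apply Matrix.IsDiag.smul
        rw [Matrix.mul_add, Matrix.add_mul, ← Matrix.mul_kronecker_mul,
          ← Matrix.mul_kronecker_mul, ← Matrix.mul_kronecker_mul, ← Matrix.mul_kronecker_mul,
          Matrix.mul_one, Matrix.mul_one, uMat_mul_uMat, uKron_mul_self, uXu]
        apply Matrix.IsDiag.add
        · exact Matrix.isDiag_one.kronecker ih
        · refine Matrix.IsDiag.kronecker ?_ Matrix.isDiag_one
          intro a b hab
          fin_cases a <;> fin_cases b <;> simp_all
      exact key (Equiv.injective _ |>.ne hij)

theorem uKron_diagonalizes_Dmat (n : ℕ) (hn : 1 ≤ n) :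
    (uKron n * Dmat n * uKron n).IsDiag := isDiag_aux n
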